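/- Let L and L̃ be filtered SLie∞-algebras, n ≥ 1, and U : L → L̃ an ∞-morphism compatible with the filtrations whose linear term φ induces a quasi-isomorphism F_nL/F_{n+1}L → F_nL̃/F_{n+1}L̃. Let α and α' be MC elements of L with α' − α ∈ F_nL, and suppose there exists a rectified 1-cell β̃ = β̃_0(t_0) + dt_0 β̃_1 in MC_•(L̃) with β̃_1 ∈ (F_nL̃)^{−1}, β̃_0(0) = U_*(α) and β̃_0(1) = U_*(α'). Then there exist ρ_1 ∈ (F_nL)^{−1} and γ̃ ∈ (F_nL̃)^{−2} such that α' − α − ∂ρ_1 ∈ F_{n+1}L and β̃_1 − φ(ρ_1) − ∂γ̃ ∈ F_{n+1}L̃. -/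

import Mathlib

/-!
# Filtered shifted L∞-algebras (core framework)

We work over a field `k` of characteristic zero.  A *shifted* L∞-algebra
(`SLie∞`-algebra) is modelled as an internally ℤ-graded `k`-module `L`
(`deg : ℤ → Submodule k L`, internal direct sum) with a degree `+1`
differential `diff`, and symmetric degree `+1` multibrackets
`br m : L^m → L` (`m ≥ 2`, extended by `0` for `m < 2`) which are graded
symmetric with Koszul signs and satisfy the generalized Jacobi relations.
A *filtered* `SLie∞`-algebra in addition carries a complete descending
filtration `F : ℕ → Submodule k L` (with `F 0 = F 1 = ⊤`) by subcomplexes,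
compatible with the brackets.

Infinite sums (curvature, twists, pushforwards of Maurer-Cartan elements, ...)
are expressed relationally via `IsLim`: `IsLim a x` says that the sequence of
partial sums `a` converges to `x` in the topology determined by the filtration.
-/

open Finset

noncomputable section

/-- The Koszul sign `ε(σ; v₁, …, v_m)` of a permutation `σ` acting on homogeneous
elements of degrees `d i`: the product of `(-1)^(d i * d j)` over all
inversions `(i, j)` of `σ`. -/
def koszulSign {m : ℕ} (d : Fin m → ℤ) (σ : Equiv.Perm (Fin m)) : ℤˣ :=
  ∏ p ∈ Finset.univ.filter (fun p : Fin m × Fin m => p.1 < p.2 ∧ σ p.2 < σ p.1),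
    (-1 : ℤˣ) ^ (d p.1 * d p.2)

theorem card_le_of_fin {m : ℕ} (S : Finset (Fin m)) : S.card ≤ m := by
  simpa using S.card_le_univ

/-- The `(S.card, m - S.card)`-shuffle permutation determined by a subset
`S ⊆ {0, …, m-1}`: it enumerates the elements of `S` (in increasing order) first
and then the elements of the complement of `S` (in increasing order). -/
def moveFrontPerm {m : ℕ} (S : Finset (Fin m)) : Equiv.Perm (Fin m) :=
  Tuple.sort (fun i => (toLex ((if i ∈ S then (0 : Fin 2) else 1), i) : Fin 2 ×ₗ Fin m))

/-- The index of the `j`-th element of the front block. -/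
def frontIdx {m : ℕ} (S : Finset (Fin m)) (j : Fin S.card) : Fin m :=
  ⟨j, lt_of_lt_of_le j.isLt (card_le_of_fin S)⟩

/-- The index of the `j`-th element of the back block. -/
def backIdx {m : ℕ} (S : Finset (Fin m)) (j : Fin (m - S.card)) : Fin m :=
  ⟨S.card + j, by have h1 := card_le_of_fin S; have h2 := j.isLt; omega⟩

variable (k : Type) [Field k] [CharZero k]

/-- A filtered shifted L∞-algebra (`SLie∞`-algebra) over `k`. -/
structure FilteredSLie where
  /-- underlying `k`-module -/
  L : Type
  [addgrp : AddCommGroup L]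
  [mod : Module k L]
  /-- internal ℤ-grading -/
  deg : ℤ → Submodule k L
  internal : DirectSum.IsInternal deg
  /-- the differential `∂` -/
  diff : L →ₗ[k] L
  diff_sq : ∀ x, diff (diff x) = 0
  diff_deg : ∀ (d : ℤ) (x), x ∈ deg d → diff x ∈ deg (d + 1)
  /-- degree `1` symmetric multibrackets `{·, …, ·}_m`; by convention `br m = 0` for `m < 2`. -/
  br : ∀ m : ℕ, MultilinearMap k (fun _ : Fin m => L) L
  br_low : ∀ m, m < 2 → br m = 0
  br_deg : ∀ (m : ℕ) (d : Fin m → ℤ) (v : Fin m → L), (∀ i, v i ∈ deg (d i)) →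
      br m v ∈ deg (1 + ∑ i, d i)
  br_symm : ∀ (m : ℕ) (d : Fin m → ℤ) (v : Fin m → L), (∀ i, v i ∈ deg (d i)) →
      ∀ σ : Equiv.Perm (Fin m), br m (v ∘ σ) = ((koszulSign d σ : ℤˣ) : ℤ) • br m v
  /-- the generalized Jacobi relations of a shifted L∞-algebra; the sum over
  `(p, m-p)`-shuffles is written as a sum over subsets `S` of cardinality `p`. -/
  jacobi : ∀ (m : ℕ), 2 ≤ m → ∀ (d : Fin m → ℤ) (v : Fin m → L), (∀ i, v i ∈ deg (d i)) →
      diff (br m v)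
        + ∑ i : Fin m,
            (((-1 : ℤˣ) ^ (∑ j ∈ Finset.univ.filter (fun j => j < i), d j) : ℤˣ) : ℤ) •
              br m (Function.update v i (diff (v i)))
        + ∑ S ∈ Finset.univ.filter (fun S : Finset (Fin m) => 2 ≤ S.card ∧ S.card ≤ m - 1),
            ((koszulSign d (moveFrontPerm S) : ℤˣ) : ℤ) •
              br (m - S.card + 1)
                (Fin.cons (br S.card fun j => v (moveFrontPerm S (frontIdx S j)))
                  (fun j => v (moveFrontPerm S (backIdx S j))))
        = 0
  /-- complete descending filtration `L = F 1 ⊇ F 2 ⊇ ⋯` (we also set `F 0 = ⊤`). -/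
  F : ℕ → Submodule k L
  F_zero : F 0 = ⊤
  F_one : F 1 = ⊤
  F_anti : ∀ {a b : ℕ}, a ≤ b → F b ≤ F a
  F_diff : ∀ (n : ℕ) (x), x ∈ F n → diff x ∈ F n
  F_graded : ∀ n : ℕ, F n = ⨆ d : ℤ, (F n ⊓ deg d)
  F_br : ∀ (m : ℕ) (ι : Fin m → ℕ) (v : Fin m → L), (∀ i, v i ∈ F (ι i)) →
      br m v ∈ F (∑ i, ι i)
  /-- the filtration is separated … -/
  sep : ∀ x : L, (∀ n, x ∈ F n) → x = 0
  /-- … and complete: `L = lim L / F n`. -/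
  complete : ∀ a : ℕ → L, (∀ n, a (n + 1) - a n ∈ F (n + 1)) →
      ∃ x, ∀ n, x - a n ∈ F (n + 1)

attribute [instance] FilteredSLie.addgrp FilteredSLie.mod

namespace FilteredSLie

variable {k}
variable (A : FilteredSLie k)

/-- `A.IsLim a x`: the sequence `a` converges to `x` in the filtration topology. -/
def IsLim (a : ℕ → A.L) (x : A.L) : Prop :=
  ∀ n : ℕ, ∃ N : ℕ, ∀ m ≥ N, x - a m ∈ A.F n

/-- Partial sums of the curvature `curv α = ∂α + Σ_{m ≥ 2} (1/m!) {α, …, α}_m`. -/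
def curvPartial (α : A.L) (M : ℕ) : A.L :=
  A.diff α + ∑ m ∈ Finset.range (M + 1), ((m.factorial : k)⁻¹) • A.br m (fun _ => α)

/-- `A.IsCurv α c` : `c = curv α`. -/
def IsCurv (α : A.L) (c : A.L) : Prop := A.IsLim (A.curvPartial α) c

/-- `α` is a Maurer-Cartan element: `α` has degree `0` and `curv α = 0`. -/
def IsMC (α : A.L) : Prop := α ∈ A.deg 0 ∧ A.IsCurv α 0

/-- Partial sums of the twisted differential
`∂^α v = ∂v + Σ_{m ≥ 1} (1/m!) {α, …, α, v}_{m+1}`. -/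
def twistDiffPartial (α v : A.L) (M : ℕ) : A.L :=
  A.diff v + ∑ m ∈ Finset.range (M + 1),
    ((m.factorial : k)⁻¹) • A.br (m + 1) (Fin.snoc (fun _ : Fin m => α) v)

/-- `A.IsTwistDiff α v w` : `w = ∂^α v`. -/
def IsTwistDiff (α v w : A.L) : Prop := A.IsLim (A.twistDiffPartial α v) w

/-! ### Coefficientwise operations on `L ⊗̂ k[t]`

An element of `L ⊗̂ k[t]` (power series whose coefficients tend to `0` in the
filtration topology) is modelled by its coefficient sequence `ℕ → L`. -/

/-- The `j`-th coefficient of the bracket of power series (Cauchy product). -/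
def coeffBr (m : ℕ) (c : Fin m → (ℕ → A.L)) (j : ℕ) : A.L :=
  ∑ f ∈ Finset.univ.filter (fun f : Fin m → Fin (j + 1) => ∑ i, ((f i : ℕ)) = j),
    A.br m (fun i => c i (f i))

/-- Partial sums of the `j`-th coefficient of `curv (β₀(t))`. -/
def coeffCurvPartial (b0 : ℕ → A.L) (j M : ℕ) : A.L :=
  A.diff (b0 j) +
    ∑ m ∈ Finset.range (M + 1), ((m.factorial : k)⁻¹) • A.coeffBr m (fun _ => b0) j

/-- Partial sums of the `j`-th coefficient of `∂^{β₀(t)} β₁(t)`. -/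
def coeffFlowPartial (b0 b1 : ℕ → A.L) (j M : ℕ) : A.L :=
  A.diff (b1 j) + ∑ m ∈ Finset.range (M + 1),
    ((m.factorial : k)⁻¹) •
      A.coeffBr (m + 1) (fun i : Fin (m + 1) => if (i : ℕ) < m then b0 else b1) j

/-- `A.IsEval1 b x` : the power series with coefficients `b` evaluates to `x` at `t = 1`. -/
def IsEval1 (b : ℕ → A.L) (x : A.L) : Prop :=
  A.IsLim (fun M => ∑ j ∈ Finset.range (M + 1), b j) x

end FilteredSLie

/-- A `1`-cell `β = β₀(t₀) + dt₀ β₁(t₀)` in the Deligne–Getzler–Hinich ∞-groupoid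
`MC_•(A)`, i.e. a Maurer–Cartan element of `A ⊗̂ Ω₁`: written in terms of the
coefficient sequences `b0` of `β₀` and `b1` of `β₁`.  The Maurer–Cartan equation
is equivalent to `curv (β₀(t₀)) = 0` (`mc`) together with
`(d/dt₀) β₀(t₀) = ∂^{β₀(t₀)} β₁(t₀)` (`flow`). -/
structure OneCell {k : Type} [Field k] [CharZero k] (A : FilteredSLie k) where
  b0 : ℕ → A.L
  b1 : ℕ → A.L
  b0_deg : ∀ j, b0 j ∈ A.deg 0
  b1_deg : ∀ j, b1 j ∈ A.deg (-1)
  b0_decay : ∀ n : ℕ, ∃ N, ∀ j ≥ N, b0 j ∈ A.F n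
  b1_decay : ∀ n : ℕ, ∃ N, ∀ j ≥ N, b1 j ∈ A.F n
  mc : ∀ j, A.IsLim (A.coeffCurvPartial b0 j) 0
  flow : ∀ j, A.IsLim (A.coeffFlowPartial b0 b1 j) ((j + 1) • b0 (j + 1))

namespace OneCell

variable {k : Type} [Field k] [CharZero k] {A : FilteredSLie k}

/-- A `1`-cell is *rectified* if `β₁` is constant in `t₀`. -/
def Rectified (c : OneCell A) : Prop := ∀ j, 1 ≤ j → c.b1 j = 0

/-- A `1`-cell connects `β₀(0)` to `β₀(1)`. -/
def Connects (c : OneCell A) (x y : A.L) : Prop :=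
  c.b0 0 = x ∧ A.IsEval1 c.b0 y

end OneCell

/-- `Q'_p`: the corestriction of the codifferential encoding the `SLie∞`-structure:
`Q'_1 = ∂` and `Q'_p = {·, …, ·}_p` for `p ≠ 1`. -/
def FilteredSLie.Qarg {k : Type} [Field k] [CharZero k]
    (A : FilteredSLie k) (p : ℕ) (w : Fin p → A.L) : A.L :=
  if h : p = 1 then A.diff (w ⟨0, by omega⟩) else A.br p w

/-- The permutation of `{0, …, m-1}` sorting the indices into the consecutive blocks
determined by `π : Fin m → Fin p` (each block listed in increasing order). -/
def sortByBlocks {m p : ℕ} (π : Fin m → Fin p) : Equiv.Perm (Fin m) :=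
  Tuple.sort (fun i => (toLex (π i, i) : Fin p ×ₗ Fin m))

/-- The block of a partition `π : Fin m → Fin p` over `i : Fin p`. -/
def blockFiber {m p : ℕ} (π : Fin m → Fin p) (i : Fin p) : Finset (Fin m) :=
  Finset.univ.filter (fun a => π a = i)


/-- An `∞`-morphism `U : A → B` of filtered `SLie∞`-algebras, compatible with the
filtrations.  It is recorded via its corestriction: the family of graded symmetric
degree-`0` multilinear maps `U' m : A^m → B` (`m ≥ 1`).  The field `compat` is the
componentwise form of the equation `U ∘ Q = Q̃ ∘ U` of coalgebra homomorphisms: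
the sum over `(p, m-p)`-shuffles is written as a sum over nonempty subsets `S`,
and the corestriction of `Q̃ ∘ U` as a sum over partitions of `{0, …, m-1}`
(with ordered blocks, whence the factor `1/p!`), encoded by surjections
`π : Fin m → Fin p`. -/
structure InfMorphism (A B : FilteredSLie k) where
  U' : ∀ m : ℕ, MultilinearMap k (fun _ : Fin m => A.L) B.L
  U'_zero : U' 0 = 0
  U'_deg : ∀ (m : ℕ) (d : Fin m → ℤ) (v : Fin m → A.L), (∀ i, v i ∈ A.deg (d i)) →
      U' m v ∈ B.deg (∑ i, d i)
  U'_symm : ∀ (m : ℕ) (d : Fin m → ℤ) (v : Fin m → A.L), (∀ i, v i ∈ A.deg (d i)) →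
      ∀ σ : Equiv.Perm (Fin m), U' m (v ∘ σ) = ((koszulSign d σ : ℤˣ) : ℤ) • U' m v
  U'_filt : ∀ (m : ℕ) (ι : Fin m → ℕ) (v : Fin m → A.L), (∀ i, v i ∈ A.F (ι i)) →
      U' m v ∈ B.F (∑ i, ι i)
  compat : ∀ (m : ℕ), 1 ≤ m → ∀ (d : Fin m → ℤ) (v : Fin m → A.L),
      (∀ i, v i ∈ A.deg (d i)) →
      (∑ S ∈ Finset.univ.filter (fun S : Finset (Fin m) => S.Nonempty),
        ((koszulSign d (moveFrontPerm S) : ℤˣ) : ℤ) •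
          U' (m - S.card + 1)
            (Fin.cons (A.Qarg S.card fun j => v (moveFrontPerm S (frontIdx S j)))
              (fun j => v (moveFrontPerm S (backIdx S j)))))
      =
      ∑ p ∈ Finset.Icc 1 m,
        ((p.factorial : k)⁻¹) •
          ∑ π ∈ Finset.univ.filter (fun π : Fin m → Fin p => Function.Surjective π),
            ((koszulSign d (sortByBlocks π) : ℤˣ) : ℤ) •
              B.Qarg p (fun i =>
                U' (blockFiber π i).card
                  (fun j => v (((blockFiber π i).orderIsoOfFin rfl j : Fin m))))

namespace InfMorphism

variable {k : Type} [Field k] [CharZero k] {A B : FilteredSLie k}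

/-- The linear term `φ` of an `∞`-morphism. -/
def lin (U : InfMorphism k A B) (x : A.L) : B.L := U.U' 1 (fun _ => x)

/-- Partial sums of `U_*(α) = Σ_{m ≥ 1} (1/m!) U'(α^m)`. -/
def pushPartial (U : InfMorphism k A B) (α : A.L) (M : ℕ) : B.L :=
  ∑ m ∈ Finset.range (M + 1), ((m.factorial : k)⁻¹) • U.U' m (fun _ => α)

/-- `U.IsPush α β` : `β = U_*(α)`. -/
def IsPush (U : InfMorphism k A B) (α : A.L) (β : B.L) : Prop :=
  B.IsLim (U.pushPartial α) β

/-- The `j`-th coefficient of `U'` applied to power series (Cauchy product). -/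
def coeffU (U : InfMorphism k A B) (m : ℕ) (c : Fin m → (ℕ → A.L)) (j : ℕ) : B.L :=
  ∑ f ∈ Finset.univ.filter (fun f : Fin m → Fin (j + 1) => ∑ i, ((f i : ℕ)) = j),
    U.U' m (fun i => c i (f i))

/-- `U.IsPushCell c c'` : the `1`-cell `c'` of `MC_•(B)` is the image
`(U ⊗̂ Ω₁)_* c` of the `1`-cell `c` of `MC_•(A)`. -/
def IsPushCell (U : InfMorphism k A B) (c : OneCell A) (c' : OneCell B) : Prop :=
  (∀ j, B.IsLim (fun M => ∑ m ∈ Finset.range (M + 1),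
      ((m.factorial : k)⁻¹) • U.coeffU m (fun _ => c.b0) j) (c'.b0 j)) ∧
  (∀ j, B.IsLim (fun M => ∑ m ∈ Finset.range (M + 1),
      ((m.factorial : k)⁻¹) •
        U.coeffU (m + 1) (fun i : Fin (m + 1) => if (i : ℕ) < m then c.b0 else c.b1) j)
      (c'.b1 j))

end InfMorphism

/-- The linear term `φ` of `U` restricts to a quasi-isomorphism of cochain complexes
`F_n A → F_n B`:  `φ` induces a surjection and an injection on the cohomology of the
subcomplexes `F_n` (in every internal degree `d`). -/
def IsQuasiIsoOnF {k : Type} [Field k] [CharZero k] {A B : FilteredSLie k}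
    (U : InfMorphism k A B) (n : ℕ) : Prop :=
  (∀ (d : ℤ) (x : B.L), x ∈ B.F n → x ∈ B.deg d → B.diff x = 0 →
      ∃ y z, y ∈ A.F n ∧ y ∈ A.deg d ∧ A.diff y = 0 ∧
        z ∈ B.F n ∧ z ∈ B.deg (d - 1) ∧ U.lin y - x = B.diff z) ∧
  (∀ (d : ℤ) (y : A.L), y ∈ A.F n → y ∈ A.deg d → A.diff y = 0 →
      (∃ z, z ∈ B.F n ∧ z ∈ B.deg (d - 1) ∧ U.lin y = B.diff z) →
      ∃ w, w ∈ A.F n ∧ w ∈ A.deg (d - 1) ∧ y = A.diff w)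

/-- The linear term `φ` of `U` induces a quasi-isomorphism of the associated graded
quotient complexes `F_n A / F_{n+1} A → F_n B / F_{n+1} B`. -/
def IsQuasiIsoOnGr {k : Type} [Field k] [CharZero k] {A B : FilteredSLie k}
    (U : InfMorphism k A B) (n : ℕ) : Prop :=
  (∀ (d : ℤ) (x : B.L), x ∈ B.F n → x ∈ B.deg d → B.diff x ∈ B.F (n + 1) →
      ∃ y z, y ∈ A.F n ∧ y ∈ A.deg d ∧ A.diff y ∈ A.F (n + 1) ∧
        z ∈ B.F n ∧ z ∈ B.deg (d - 1) ∧ U.lin y - x - B.diff z ∈ B.F (n + 1)) ∧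
  (∀ (d : ℤ) (y : A.L), y ∈ A.F n → y ∈ A.deg d → A.diff y ∈ A.F (n + 1) →
      (∃ z, z ∈ B.F n ∧ z ∈ B.deg (d - 1) ∧ U.lin y - B.diff z ∈ B.F (n + 1)) →
      ∃ w, w ∈ A.F n ∧ w ∈ A.deg (d - 1) ∧ y - A.diff w ∈ A.F (n + 1))

/-!
STATEMENT 8.  Let `L`, `L̃` be filtered `SLie∞`-algebras, `n ≥ 1`, and
`U : L → L̃` an `∞`-morphism compatible with the filtrations whose linear term
`φ` induces a quasi-isomorphism `F_n L / F_{n+1} L → F_n L̃ / F_{n+1} L̃`.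
Let `α`, `α'` be Maurer–Cartan elements of `L` with `α' - α ∈ F_n L`, and
suppose there exists a rectified `1`-cell `β̃ = β̃₀(t₀) + dt₀ β̃₁` in
`MC_•(L̃)` with `β̃₁ ∈ (F_n L̃)^{-1}`, `β̃₀(0) = U_*(α)` and `β̃₀(1) = U_*(α')`.
Then there exist `ρ₁ ∈ (F_n L)^{-1}` and `γ̃ ∈ (F_n L̃)^{-2}` such that
`α' - α - ∂ρ₁ ∈ F_{n+1} L` and `β̃₁ - φ(ρ₁) - ∂γ̃ ∈ F_{n+1} L̃`.
-/

section Helpers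

variable {k : Type} [Field k] [CharZero k]

lemma koszul_one (d : Fin 1 → ℤ) (σ : Equiv.Perm (Fin 1)) : koszulSign d σ = 1 := by
  unfold koszulSign
  have h : (Finset.univ.filter (fun p : Fin 1 × Fin 1 => p.1 < p.2 ∧ σ p.2 < σ p.1)) = ∅ := by
    rw [Finset.eq_empty_iff_forall_notMem]
    intro p hp
    rw [Finset.mem_filter] at hp
    exact absurd hp.2.1 (by rw [Subsingleton.elim p.1 p.2]; exact lt_irrefl _)
  rw [h, Finset.prod_empty]

lemma mlin1_add {M N : Type} [AddCommGroup M] [Module k M] [AddCommGroup N] [Module k N]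
    (T : MultilinearMap k (fun _ : Fin 1 => M) N) (x y : M) :
    T (fun _ => x + y) = T (fun _ => x) + T (fun _ => y) := by
  have h : ∀ z : M, (fun _ : Fin 1 => z) = Function.update (fun _ : Fin 1 => x) 0 z := by
    intro z; funext i; rw [Subsingleton.elim i 0, Function.update_self]
  rw [h (x + y), T.map_update_add, ← h x, ← h y]

lemma mlin1_sub {M N : Type} [AddCommGroup M] [Module k M] [AddCommGroup N] [Module k N]
    (T : MultilinearMap k (fun _ : Fin 1 => M) N) (x y : M) :
    T (fun _ => x - y) = T (fun _ => x) - T (fun _ => y) := by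
  have h : ∀ z : M, (fun _ : Fin 1 => z) = Function.update (fun _ : Fin 1 => x) 0 z := by
    intro z; funext i; rw [Subsingleton.elim i 0, Function.update_self]
  rw [h (x - y), T.map_update_sub, ← h x, ← h y]

lemma tele_mem (A B : FilteredSLie k) {m n : ℕ} (hn : 1 ≤ n)
    (T : MultilinearMap k (fun _ : Fin m => A.L) B.L)
    (hT : ∀ (ι : Fin m → ℕ) (v : Fin m → A.L), (∀ i, v i ∈ A.F (ι i)) → T v ∈ B.F (∑ i, ι i))
    {x y : A.L} (h : y - x ∈ A.F n) :
    T (fun _ => y) - T (fun _ => x) ∈ B.F (n + m - 1) := by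
  have key : T (fun _ => y) - T (fun _ => x) =
      ∑ j ∈ Finset.range m, ((fun j => T (fun i : Fin m => if (i : ℕ) < j then y else x)) (j + 1)
        - (fun j => T (fun i : Fin m => if (i : ℕ) < j then y else x)) j) := by
    rw [Finset.sum_range_sub (fun j => T (fun i : Fin m => if (i : ℕ) < j then y else x)) m]
    have e1 : (fun _ : Fin m => y) = (fun i : Fin m => if (i : ℕ) < m then y else x) := by
      funext i; rw [if_pos i.isLt]
    have e2 : (fun _ : Fin m => x) = (fun i : Fin m => if (i : ℕ) < 0 then y else x) := by
      funext i; rw [if_neg (Nat.not_lt_zero _)]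
    rw [e1, e2]
  rw [key]
  apply Submodule.sum_mem
  intro j hj
  rw [Finset.mem_range] at hj
  set jf : Fin m := ⟨j, hj⟩ with hjf
  set v : Fin m → A.L := fun i => if (i : ℕ) < j then y else x with hv
  have e1 : (fun i : Fin m => if (i : ℕ) < j + 1 then y else x) = Function.update v jf y := by
    funext i
    rcases eq_or_ne i jf with rfl | hne
    · rw [Function.update_self, if_pos (by simp [hjf])]
    · rw [Function.update_of_ne hne]
      have hij : (i : ℕ) ≠ j := fun hh => hne (Fin.ext (by simp [hjf, hh]))
      simp only [hv]
      by_cases hlt : (i : ℕ) < j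
      · rw [if_pos (by omega), if_pos hlt]
      · rw [if_neg (by omega), if_neg hlt]
  have e2 : v = Function.update v jf x := by
    funext i
    rcases eq_or_ne i jf with rfl | hne
    · rw [Function.update_self, hv]
      simp [hjf]
    · rw [Function.update_of_ne hne]
  have e3 : T (fun i : Fin m => if (i : ℕ) < j + 1 then y else x) - T v
      = T (Function.update v jf (y - x)) := by
    rw [T.map_update_sub, ← e1, ← e2]
  simp only []
  rw [e3]
  have hsum : ∑ i : Fin m, (if i = jf then n else 1) = n + m - 1 := by
    rw [← Finset.add_sum_erase _ _ (Finset.mem_univ jf), if_pos rfl]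
    have h2 : ∑ i ∈ Finset.univ.erase jf, (if i = jf then n else 1) = m - 1 := by
      rw [Finset.sum_congr rfl (fun i hi => if_neg (Finset.ne_of_mem_erase hi)),
        Finset.sum_const, smul_eq_mul, mul_one,
        Finset.card_erase_of_mem (Finset.mem_univ jf), Finset.card_univ, Fintype.card_fin]
    rw [h2]
    omega
  have hm := hT (fun i => if i = jf then n else 1) (Function.update v jf (y - x)) ?_
  · rwa [hsum] at hm
  · intro i
    rcases eq_or_ne i jf with rfl | hne
    · simpa only [if_pos rfl, Function.update_self, if_true] using h
    · simp only [if_neg hne, Function.update_of_ne hne, A.F_one]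
      trivial

lemma lin_filt {A B : FilteredSLie k} (U : InfMorphism k A B) {n : ℕ} {x : A.L}
    (hx : x ∈ A.F n) : U.lin x ∈ B.F n := by
  have h := U.U'_filt 1 (fun _ => n) (fun _ => x) (fun _ => hx)
  simpa [InfMorphism.lin] using h

lemma lin_deg {A B : FilteredSLie k} (U : InfMorphism k A B) {d : ℤ} {x : A.L}
    (hx : x ∈ A.deg d) : U.lin x ∈ B.deg d := by
  have h := U.U'_deg 1 (fun _ => d) (fun _ => x) (fun _ => hx)
  simpa [InfMorphism.lin] using h

end Helpers
section Chain

variable {k : Type} [Field k] [CharZero k]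

lemma chain_map {A B : FilteredSLie k} (U : InfMorphism k A B) (d₀ : ℤ) (x : A.L)
    (hx : x ∈ A.deg d₀) : U.lin (A.diff x) = B.diff (U.lin x) := by
  have h := U.compat 1 le_rfl (fun _ => d₀) (fun _ => x) (fun _ => hx)
  have hS : (Finset.univ.filter (fun S : Finset (Fin 1) => S.Nonempty)) = {{0}} := by decide
  have hπ : (Finset.univ.filter (fun π : Fin 1 → Fin 1 => Function.Surjective π))
      = {fun _ => 0} := by decide
  rw [hS, Finset.sum_singleton] at h
  rw [show Finset.Icc 1 1 = {1} from Finset.Icc_self 1, Finset.sum_singleton, hπ,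
    Finset.sum_singleton] at h
  rw [koszul_one, koszul_one] at h
  have hbf : ∀ i : Fin 1, (blockFiber (fun _ : Fin 1 => (0 : Fin 1)) i).card = 1 := by decide
  simp only [Units.val_one, one_smul, Nat.factorial_one, Nat.cast_one, inv_one,
    Finset.card_singleton, hbf, FilteredSLie.Qarg, reduceDIte] at h
  have e1 : U.lin (A.diff x) = U.U' 1 (Fin.cons (A.diff x) (fun _ : Fin 0 => x)) := by
    show U.U' 1 _ = _
    congr 1
    funext i
    rw [Subsingleton.elim i 0]
    rfl
  have e2 : B.diff (U.U' 1 (fun _ : Fin 1 => x)) = B.diff (U.lin x) := rfl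
  exact e1.trans (h.trans e2)

end Chain
theorem coboundary_with_compatible_homotopy
    {k : Type} [Field k] [CharZero k] {A B : FilteredSLie k}
    (U : InfMorphism k A B) (n : ℕ) (hn : 1 ≤ n)
    (hqis : IsQuasiIsoOnGr U n)
    (α α' : A.L) (hα : A.IsMC α) (hα' : A.IsMC α')
    (hdiff : α' - α ∈ A.F n)
    (Uα Uα' : B.L) (hUα : U.IsPush α Uα) (hUα' : U.IsPush α' Uα')
    (c : OneCell B) (hrect : c.Rectified) (hc1 : c.b1 0 ∈ B.F n)
    (hc : c.Connects Uα Uα') :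
    ∃ (ρ₁ : A.L) (γt : B.L),
      ρ₁ ∈ A.deg (-1) ∧ ρ₁ ∈ A.F n ∧
      γt ∈ B.deg (-2) ∧ γt ∈ B.F n ∧
      α' - α - A.diff ρ₁ ∈ A.F (n + 1) ∧
      c.b1 0 - U.lin ρ₁ - B.diff γt ∈ B.F (n + 1) := by
  classical
  -- Step 1 : ∂(α' - α) ∈ F (n+1)
  have hbr_term : ∀ m : ℕ, A.br m (fun _ => α') - A.br m (fun _ => α) ∈ A.F (n + 1) := by
    intro m
    by_cases hm : m < 2
    · rw [A.br_low m hm]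
      simp only [MultilinearMap.zero_apply, sub_self]
      exact zero_mem _
    · exact A.F_anti (by omega) (tele_mem A A hn (A.br m) (A.F_br m) hdiff)
  have hdiff_cl : A.diff (α' - α) ∈ A.F (n + 1) := by
    obtain ⟨N1, h1⟩ := hα.2 (n + 1)
    obtain ⟨N2, h2⟩ := hα'.2 (n + 1)
    set M := max N1 N2 with hM
    have p1 : A.curvPartial α M ∈ A.F (n + 1) := by
      have h' := h1 M (le_max_left _ _)
      rw [zero_sub] at h'
      simpa using neg_mem h'
    have p2 : A.curvPartial α' M ∈ A.F (n + 1) := by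
      have h' := h2 M (le_max_right _ _)
      rw [zero_sub] at h'
      simpa using neg_mem h'
    have hSig : (∑ m ∈ Finset.range (M + 1), ((m.factorial : k)⁻¹) • A.br m (fun _ => α'))
        - (∑ m ∈ Finset.range (M + 1), ((m.factorial : k)⁻¹) • A.br m (fun _ => α))
        ∈ A.F (n + 1) := by
      rw [← Finset.sum_sub_distrib]
      refine Submodule.sum_mem _ (fun m _ => ?_)
      rw [← smul_sub]
      exact Submodule.smul_mem _ _ (hbr_term m)
    have e : A.diff (α' - α) = (A.curvPartial α' M - A.curvPartial α M) -
        ((∑ m ∈ Finset.range (M + 1), ((m.factorial : k)⁻¹) • A.br m (fun _ => α'))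
        - (∑ m ∈ Finset.range (M + 1), ((m.factorial : k)⁻¹) • A.br m (fun _ => α))) := by
      simp only [FilteredSLie.curvPartial, map_sub]
      abel
    rw [e]
    exact sub_mem (sub_mem p2 p1) hSig
  -- Step 2 : Uα' - Uα ≡ φ(α' - α)
  have hpush : Uα' - Uα - U.lin (α' - α) ∈ B.F (n + 1) := by
    obtain ⟨N1, h1⟩ := hUα (n + 1)
    obtain ⟨N2, h2⟩ := hUα' (n + 1)
    set M := max (max N1 N2) 1 with hM
    have q1 := h1 M (le_trans (le_max_left _ _) (le_max_left _ _))
    have q2 := h2 M (le_trans (le_max_right _ _) (le_max_left _ _))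
    have hterm : ∀ m ∈ (Finset.range (M + 1)).erase 1,
        ((m.factorial : k)⁻¹) • (U.U' m (fun _ => α') - U.U' m (fun _ => α)) ∈ B.F (n + 1) := by
      intro m hm
      have hm1 : m ≠ 1 := Finset.ne_of_mem_erase hm
      refine Submodule.smul_mem _ _ ?_
      by_cases hm0 : m = 0
      · subst hm0
        rw [U.U'_zero]
        simp only [MultilinearMap.zero_apply, sub_self]
        exact zero_mem _
      · exact B.F_anti (by omega) (tele_mem A B hn (U.U' m) (U.U'_filt m) hdiff)
    have hsum : ∑ m ∈ Finset.range (M + 1),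
        ((m.factorial : k)⁻¹) • (U.U' m (fun _ => α') - U.U' m (fun _ => α))
        - U.lin (α' - α) ∈ B.F (n + 1) := by
      rw [← Finset.add_sum_erase _ _ (Finset.mem_range.mpr (by omega : 1 < M + 1))]
      have t1 : ((Nat.factorial 1 : k)⁻¹) • (U.U' 1 (fun _ => α') - U.U' 1 (fun _ => α))
          = U.lin (α' - α) := by
        rw [Nat.factorial_one, Nat.cast_one, inv_one, one_smul, ← mlin1_sub]
        rfl
      rw [t1, add_sub_cancel_left]
      exact Submodule.sum_mem _ hterm
    have e2 : Uα' - Uα - U.lin (α' - α) =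
        ((Uα' - U.pushPartial α' M) - (Uα - U.pushPartial α M))
        + (∑ m ∈ Finset.range (M + 1),
            ((m.factorial : k)⁻¹) • (U.U' m (fun _ => α') - U.U' m (fun _ => α))
          - U.lin (α' - α)) := by
      simp only [InfMorphism.pushPartial, smul_sub, Finset.sum_sub_distrib]
      abel
    rw [e2]
    exact add_mem (sub_mem q2 q1) hsum
  -- Step 3a : b0 (j+1) ∈ F n
  have hb0Fn : ∀ j : ℕ, c.b0 (j + 1) ∈ B.F n := by
    intro j
    obtain ⟨N, hN⟩ := c.flow j n
    have hpart : B.coeffFlowPartial c.b0 c.b1 j N ∈ B.F n := by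
      unfold FilteredSLie.coeffFlowPartial
      apply add_mem
      · rcases Nat.eq_zero_or_pos j with rfl | hj
        · exact B.F_diff n _ hc1
        · rw [hrect j hj, map_zero]
          exact zero_mem _
      · refine Submodule.sum_mem _ (fun m _ => Submodule.smul_mem _ _ ?_)
        unfold FilteredSLie.coeffBr
        refine Submodule.sum_mem _ (fun f hf => ?_)
        by_cases hm0 : m = 0
        · subst hm0
          rw [B.br_low 1 (by omega)]
          simp only [MultilinearMap.zero_apply]
          exact zero_mem _
        by_cases hf0 : ((f (Fin.last m) : ℕ)) = 0
        · have hmem := B.F_br (m + 1) (fun i => if (i : ℕ) < m then 1 else n)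
            (fun i => (if (i : ℕ) < m then c.b0 else c.b1) ((f i : ℕ))) ?_
          · refine B.F_anti ?_ hmem
            simp only [Fin.sum_univ_castSucc, Fin.val_last, lt_self_iff_false, if_false]
            exact Nat.le_add_left n _
          · intro i
            by_cases him : (i : ℕ) < m
            · simp only [if_pos him, B.F_one]
              trivial
            · simp only [if_neg him]
              have hil : i = Fin.last m := by
                apply Fin.ext
                have := i.isLt
                rw [Fin.val_last]
                omega
              rw [hil, hf0]
              exact hc1
        · have hz : (fun i : Fin (m + 1) => (if (i : ℕ) < m then c.b0 else c.b1) ((f i : ℕ)))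
              (Fin.last m) = 0 := by
            simp only [Fin.val_last, lt_self_iff_false, if_false]
            exact hrect _ (by omega)
          rw [MultilinearMap.map_coord_zero _ (Fin.last m) hz]
          exact zero_mem _
    have h1 := hN N le_rfl
    have h2 : (j + 1) • c.b0 (j + 1) ∈ B.F n := by
      have := add_mem h1 hpart
      simpa using this
    have h3 : (((j + 1 : ℕ)) : k) • c.b0 (j + 1) ∈ B.F n := by
      rwa [Nat.cast_smul_eq_nsmul]
    have h4 := Submodule.smul_mem (B.F n) ((((j + 1 : ℕ)) : k))⁻¹ h3
    rwa [inv_smul_smul₀ (Nat.cast_ne_zero.mpr (Nat.succ_ne_zero j))] at h4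
  -- Step 3b : b0 (j+1) ∈ F (n+1) for j ≥ 1
  have hb0F1 : ∀ j : ℕ, 1 ≤ j → c.b0 (j + 1) ∈ B.F (n + 1) := by
    intro j hj
    obtain ⟨N, hN⟩ := c.flow j (n + 1)
    have hpart : B.coeffFlowPartial c.b0 c.b1 j N ∈ B.F (n + 1) := by
      unfold FilteredSLie.coeffFlowPartial
      apply add_mem
      · rw [hrect j hj, map_zero]
        exact zero_mem _
      · refine Submodule.sum_mem _ (fun m _ => Submodule.smul_mem _ _ ?_)
        unfold FilteredSLie.coeffBr
        refine Submodule.sum_mem _ (fun f hf => ?_)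
        rw [Finset.mem_filter] at hf
        have hfs := hf.2
        by_cases hm0 : m = 0
        · subst hm0
          rw [B.br_low 1 (by omega)]
          simp only [MultilinearMap.zero_apply]
          exact zero_mem _
        by_cases hf0 : ((f (Fin.last m) : ℕ)) = 0
        · rw [Fin.sum_univ_castSucc, hf0, add_zero] at hfs
          have hne : ∑ i : Fin m, ((f (Fin.castSucc i) : ℕ)) ≠ 0 := by omega
          obtain ⟨i0, -, hi0⟩ := Finset.exists_ne_zero_of_sum_ne_zero hne
          set ι : Fin (m + 1) → ℕ :=
            fun i => if i = Fin.castSucc i0 then n else if (i : ℕ) < m then 1 else n with hι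
          have hmem := B.F_br (m + 1) ι
            (fun i => (if (i : ℕ) < m then c.b0 else c.b1) ((f i : ℕ))) ?_
          · refine B.F_anti ?_ hmem
            have hne2 : Fin.castSucc i0 ≠ Fin.last m := by
              intro hh
              have h1 := i0.isLt
              have h2 : ((Fin.castSucc i0 : Fin (m + 1)) : ℕ) = m := by rw [hh, Fin.val_last]
              simp at h2
              omega
            have hpair : ι (Fin.castSucc i0) + ι (Fin.last m) ≤ ∑ i, ι i := by
              have := Finset.sum_le_sum_of_subset
                (Finset.subset_univ ({Fin.castSucc i0, Fin.last m} : Finset (Fin (m + 1))))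
                (f := ι)
              rwa [Finset.sum_pair hne2] at this
            have v1 : ι (Fin.castSucc i0) = n := if_pos rfl
            have v2 : ι (Fin.last m) = n := by
              simp only [hι]
              rw [if_neg (fun hh => hne2 hh.symm), if_neg (by simp [Fin.val_last])]
            rw [v1, v2] at hpair
            omega
          · intro i
            rcases eq_or_ne i (Fin.castSucc i0) with rfl | hne
            · have hlt : ((Fin.castSucc i0 : Fin (m + 1)) : ℕ) < m := by
                simpa using i0.isLt
              simp only [hι, if_pos rfl, if_pos hlt]
              obtain ⟨t, ht⟩ := Nat.exists_eq_succ_of_ne_zero hi0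
              rw [ht]
              exact hb0Fn t
            · simp only [hι, if_neg hne]
              by_cases him : (i : ℕ) < m
              · simp only [if_pos him, B.F_one]
                trivial
              · simp only [if_neg him]
                have hil : i = Fin.last m := by
                  apply Fin.ext
                  have := i.isLt
                  rw [Fin.val_last]
                  omega
                rw [hil, hf0]
                exact hc1
        · have hz : (fun i : Fin (m + 1) => (if (i : ℕ) < m then c.b0 else c.b1) ((f i : ℕ)))
              (Fin.last m) = 0 := by
            simp only [Fin.val_last, lt_self_iff_false, if_false]
            exact hrect _ (by omega)
          rw [MultilinearMap.map_coord_zero _ (Fin.last m) hz]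
          exact zero_mem _
    have h1 := hN N le_rfl
    have h2 : (j + 1) • c.b0 (j + 1) ∈ B.F (n + 1) := by
      have := add_mem h1 hpart
      simpa using this
    have h3 : (((j + 1 : ℕ)) : k) • c.b0 (j + 1) ∈ B.F (n + 1) := by
      rwa [Nat.cast_smul_eq_nsmul]
    have h4 := Submodule.smul_mem (B.F (n + 1)) ((((j + 1 : ℕ)) : k))⁻¹ h3
    rwa [inv_smul_smul₀ (Nat.cast_ne_zero.mpr (Nat.succ_ne_zero j))] at h4
  -- Step 3c : b0 1 ≡ ∂ b1 0
  have hb01 : c.b0 1 - B.diff (c.b1 0) ∈ B.F (n + 1) := by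
    obtain ⟨N, hN⟩ := c.flow 0 (n + 1)
    have hpart : B.coeffFlowPartial c.b0 c.b1 0 N - B.diff (c.b1 0) ∈ B.F (n + 1) := by
      unfold FilteredSLie.coeffFlowPartial
      rw [add_sub_cancel_left]
      refine Submodule.sum_mem _ (fun m _ => Submodule.smul_mem _ _ ?_)
      unfold FilteredSLie.coeffBr
      refine Submodule.sum_mem _ (fun f hf => ?_)
      by_cases hm0 : m = 0
      · subst hm0
        rw [B.br_low 1 (by omega)]
        simp only [MultilinearMap.zero_apply]
        exact zero_mem _
      have hfz : ∀ i : Fin (m + 1), ((f i : ℕ)) = 0 := by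
        intro i
        have := (f i).isLt
        omega
      have hmem := B.F_br (m + 1) (fun i => if (i : ℕ) < m then 1 else n)
        (fun i => (if (i : ℕ) < m then c.b0 else c.b1) ((f i : ℕ))) ?_
      · refine B.F_anti ?_ hmem
        simp only [Fin.sum_univ_castSucc, Fin.val_last, lt_self_iff_false, if_false]
        have hones : ∀ i : Fin m,
            (if ((Fin.castSucc i : Fin (m + 1)) : ℕ) < m then 1 else n) = 1 := by
          intro i
          exact if_pos (by simpa using i.isLt)
        rw [Finset.sum_congr rfl (fun i _ => hones i), Finset.sum_const, smul_eq_mul, mul_one,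
          Finset.card_univ, Fintype.card_fin]
        omega
      · intro i
        by_cases him : (i : ℕ) < m
        · simp only [if_pos him, B.F_one]
          trivial
        · simp only [if_neg him]
          rw [hfz i]
          exact hc1
    have h1 : (1 : ℕ) • c.b0 1 - B.coeffFlowPartial c.b0 c.b1 0 N ∈ B.F (n + 1) := hN N le_rfl
    rw [one_smul] at h1
    have h2 := add_mem h1 hpart
    rwa [sub_add_sub_cancel] at h2
  -- Step 3d : Uα' - Uα ≡ ∂ b1 0
  have hEval : Uα' - Uα - B.diff (c.b1 0) ∈ B.F (n + 1) := by
    obtain ⟨N, hN⟩ := hc.2 (n + 1)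
    set M := max N 1 with hMdef
    have h1 := hN M (le_max_left _ _)
    have hsplit : ∑ j ∈ Finset.range (M + 1), c.b0 j
        = c.b0 0 + c.b0 1 + ∑ j ∈ Finset.Ico 2 (M + 1), c.b0 j := by
      rw [Finset.range_eq_Ico,
        ← Finset.sum_Ico_consecutive _ (by omega : 0 ≤ 2) (by omega : 2 ≤ M + 1)]
      congr 1
      show ∑ j ∈ Finset.Ico 0 2, c.b0 j = _
      rw [← Finset.range_eq_Ico, Finset.sum_range_succ, Finset.sum_range_one]
    have htail : ∑ j ∈ Finset.Ico 2 (M + 1), c.b0 j ∈ B.F (n + 1) := by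
      refine Submodule.sum_mem _ (fun j hj => ?_)
      rw [Finset.mem_Ico] at hj
      have h2 : 1 ≤ j - 1 := by omega
      have h3 : j = (j - 1) + 1 := by omega
      rw [h3]
      exact hb0F1 (j - 1) h2
    have e : Uα' - Uα - B.diff (c.b1 0) =
        (Uα' - ∑ j ∈ Finset.range (M + 1), c.b0 j) + (∑ j ∈ Finset.Ico 2 (M + 1), c.b0 j)
        + (c.b0 1 - B.diff (c.b1 0)) := by
      rw [hsplit, hc.1]
      abel
    rw [e]
    exact add_mem (add_mem h1 htail) hb01
  -- Step 4 : φ(α' - α) ≡ ∂ b1 0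
  have hphi : U.lin (α' - α) - B.diff (c.b1 0) ∈ B.F (n + 1) := by
    have h := sub_mem hEval hpush
    have e : Uα' - Uα - B.diff (c.b1 0) - (Uα' - Uα - U.lin (α' - α))
        = U.lin (α' - α) - B.diff (c.b1 0) := by abel
    rwa [e] at h
  -- Step 5 : apply injectivity on Gr cohomology
  have hydeg : α' - α ∈ A.deg 0 := sub_mem hα'.1 hα.1
  have hz1 : c.b1 0 ∈ B.deg ((0 : ℤ) - 1) := by
    norm_num
    exact c.b1_deg 0
  obtain ⟨w, hwF, hwdeg, hw⟩ :=
    hqis.2 0 (α' - α) hdiff hydeg hdiff_cl ⟨c.b1 0, hc1, hz1, hphi⟩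
  have hwdeg' : w ∈ A.deg (-1) := by
    rwa [show (0 : ℤ) - 1 = -1 by norm_num] at hwdeg
  -- Step 6 : apply surjectivity on Gr cohomology
  have hxF : c.b1 0 - U.lin w ∈ B.F n := sub_mem hc1 (lin_filt U hwF)
  have hxdeg : c.b1 0 - U.lin w ∈ B.deg (-1) := sub_mem (c.b1_deg 0) (lin_deg U hwdeg')
  have hdx : B.diff (c.b1 0 - U.lin w) ∈ B.F (n + 1) := by
    have hcm := chain_map U (-1) w hwdeg'
    have h5 : U.lin (α' - α - A.diff w) ∈ B.F (n + 1) := lin_filt U hw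
    rw [show U.lin (α' - α - A.diff w) = U.lin (α' - α) - U.lin (A.diff w) from
      mlin1_sub (U.U' 1) _ _] at h5
    have e2 : B.diff (c.b1 0 - U.lin w)
        = -((U.lin (α' - α) - B.diff (c.b1 0)) - (U.lin (α' - α) - U.lin (A.diff w))) := by
      rw [map_sub, ← hcm]
      abel
    rw [e2]
    exact neg_mem (sub_mem hphi h5)
  obtain ⟨y', z, hy'F, hy'deg, hdy', hzF, hzdeg, hzz⟩ := hqis.1 (-1) _ hxF hxdeg hdx
  refine ⟨w + y', -z, ?_, ?_, ?_, ?_, ?_, ?_⟩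
  · exact add_mem hwdeg' hy'deg
  · exact add_mem hwF hy'F
  · have h6 : z ∈ B.deg ((-1 : ℤ) - 1) := hzdeg
    rw [show (-1 : ℤ) - 1 = -2 by norm_num] at h6
    exact neg_mem h6
  · exact neg_mem hzF
  · have e : α' - α - A.diff (w + y') = (α' - α - A.diff w) - A.diff y' := by
      rw [map_add]
      abel
    rw [e]
    exact sub_mem hw hdy'
  · have e : c.b1 0 - U.lin (w + y') - B.diff (-z)
        = -(U.lin y' - (c.b1 0 - U.lin w) - B.diff z) := by
      rw [map_neg, show U.lin (w + y') = U.lin w + U.lin y' from mlin1_add (U.U' 1) _ _]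
      abel
    rw [e]
    exact neg_mem hzz
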